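/- The map Φ₃(A,B) = tr(A+B) − 2 tr(A # B) on pairs of positive definite matrices satisfies Φ₃(A,B) ≥ 0 with equality if and only if A = B. -/

import Mathlib

open scoped ComplexOrder
open MeasureTheory

/-- The positive semidefinite square root of a matrix (zero if not positive semidefinite). -/
noncomputable def msqrt {N : ℕ} (A : Matrix (Fin N) (Fin N) ℂ) : Matrix (Fin N) (Fin N) ℂ :=
  by classical exact if h : A.PosSemidef then
    (h.1.eigenvectorUnitary.1 * Matrix.diagonal ((↑) ∘ (√·) ∘ h.1.eigenvalues) *
      (star h.1.eigenvectorUnitary : Matrix (Fin N) (Fin N) ℂ)) else 0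

/-- The Pusz–Woronowicz geometric mean `A # B = A^{1/2} (A^{-1/2} B A^{-1/2})^{1/2} A^{1/2}`. -/
noncomputable def geom {N : ℕ} (A B : Matrix (Fin N) (Fin N) ℂ) : Matrix (Fin N) (Fin N) ℂ :=
  msqrt A * msqrt ((msqrt A)⁻¹ * B * (msqrt A)⁻¹) * msqrt A

/-- The logarithm of a Hermitian matrix, via the spectral theorem (zero if not Hermitian). -/
noncomputable def mlog {N : ℕ} (A : Matrix (Fin N) (Fin N) ℂ) : Matrix (Fin N) (Fin N) ℂ :=
  by classical exact if h : A.IsHermitian then h.cfc Real.log else 0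

/-- The log Euclidean mean `exp((log A + log B)/2)`. -/
noncomputable def logEuclid {N : ℕ} (A B : Matrix (Fin N) (Fin N) ℂ) : Matrix (Fin N) (Fin N) ℂ :=
  NormedSpace.exp ((2:ℂ)⁻¹ • (mlog A + mlog B))

open scoped MatrixOrder in
lemma msqrt_eq_cfc {N : ℕ} {A : Matrix (Fin N) (Fin N) ℂ} (h : A.PosSemidef) :
    msqrt A = CFC.sqrt A := by
  unfold msqrt
  rw [dif_pos h, CFC.sqrt_eq_cfc, cfc_nnreal_eq_real _ A, h.1.cfc_eq]
  simp only [Matrix.IsHermitian.cfc, Unitary.conjStarAlgAut_apply]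
  congr 3
  funext i
  simp [Real.coe_sqrt]
  rw [max_eq_left (h.eigenvalues_nonneg i)]

open scoped MatrixOrder in
lemma msqrt_posSemidef {N : ℕ} {A : Matrix (Fin N) (Fin N) ℂ} (h : A.PosSemidef) :
    (msqrt A).PosSemidef := by
  rw [msqrt_eq_cfc h]; exact Matrix.nonneg_iff_posSemidef.mp (CFC.sqrt_nonneg A)

open scoped MatrixOrder in
lemma msqrt_mul_self {N : ℕ} {A : Matrix (Fin N) (Fin N) ℂ} (h : A.PosSemidef) :
    msqrt A * msqrt A = A := by
  rw [msqrt_eq_cfc h]; exact CFC.sqrt_mul_sqrt_self A h.nonneg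

open scoped MatrixOrder in
lemma eq_msqrt_of_sq_eq {N : ℕ} {A B : Matrix (Fin N) (Fin N) ℂ} (hB : B.PosSemidef)
    (h : A.PosSemidef) (hsq : B ^ 2 = A) : B = msqrt A := by
  rw [msqrt_eq_cfc h, eq_comm, CFC.sqrt_eq_iff A B h.nonneg hB.nonneg, ← sq, hsq]

open Matrix in
private lemma trace_aux {n : ℕ} (M : Matrix (Fin n) (Fin n) ℂ) :
    0 ≤ (Mᴴ * M).trace ∧ ((Mᴴ * M).trace = 0 ↔ M = 0) := by
  have h : (Mᴴ * M).trace = ∑ i, dotProduct (star (fun j => M j i)) (fun j => M j i) := by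
    simp [Matrix.trace, Matrix.diag, Matrix.mul_apply, dotProduct, Matrix.conjTranspose_apply]
  have hnn : ∀ i ∈ Finset.univ, (0:ℂ) ≤ dotProduct (star (fun j => M j i)) (fun j => M j i) :=
    fun i _ => dotProduct_star_self_nonneg _
  constructor
  · rw [h]; exact Finset.sum_nonneg hnn
  · rw [h]
    constructor
    · intro h0
      have hz := (Finset.sum_eq_zero_iff_of_nonneg hnn).mp h0
      ext j i
      have hcol := dotProduct_star_self_eq_zero.mp (hz i (Finset.mem_univ i))
      simpa using congrFun hcol j
    · rintro rfl; simp [dotProduct]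

open Matrix in
theorem stmt4 {N : ℕ} (A B : Matrix (Fin N) (Fin N) ℂ) (hA : A.PosDef) (hB : B.PosDef) :
    0 ≤ (A + B).trace - 2 * (geom A B).trace ∧
    ((A + B).trace - 2 * (geom A B).trace = 0 ↔ A = B) := by
  classical
  set S := msqrt A with hSdef
  have hS : S.PosSemidef := msqrt_posSemidef hA.posSemidef
  have hSS : S * S = A := msqrt_mul_self hA.posSemidef
  have hSh : Sᴴ = S := hS.1
  have hdetS : S.det ≠ 0 := by
    intro h
    exact hA.det_pos.ne' (by rw [← hSS, Matrix.det_mul, h, mul_zero])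
  have hSinv : S * S⁻¹ = 1 := Matrix.mul_nonsing_inv S (isUnit_iff_ne_zero.mpr hdetS)
  have hSinv' : S⁻¹ * S = 1 := Matrix.nonsing_inv_mul S (isUnit_iff_ne_zero.mpr hdetS)
  have hmsA : msqrt A = S := rfl
  have hSinvH : (S⁻¹)ᴴ = S⁻¹ := hS.1.inv
  set C := S⁻¹ * B * S⁻¹ with hCdef
  have hC : C.PosSemidef := by
    have := hB.posSemidef.conjTranspose_mul_mul_same (B := S⁻¹)
    rwa [hSinvH] at this
  set T := msqrt C with hTdef
  have hT : T.PosSemidef := msqrt_posSemidef hC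
  have hTh : Tᴴ = T := hT.1
  have hTT : T * T = C := msqrt_mul_self hC
  have hmsC : msqrt (S⁻¹ * B * S⁻¹) = T := rfl
  have hgeom : geom A B = S * T * S := by
    rw [geom, hmsA, hmsC]
  have hB' : S * (T * T) * S = B := by
    rw [hTT, hCdef]
    simp only [Matrix.mul_assoc]
    rw [hSinv', Matrix.mul_one, ← Matrix.mul_assoc, hSinv, Matrix.one_mul]
  set M := (1 - T) * S with hMdef
  have hMH : Mᴴ = S * (1 - T) := by
    rw [hMdef, Matrix.conjTranspose_mul, Matrix.conjTranspose_sub, Matrix.conjTranspose_one,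
      hTh, hSh]
  have hKey : Mᴴ * M = A + B - S * T * S - S * T * S := by
    rw [hMH, hMdef, ← hSS, ← hB']
    noncomm_ring
  have htr : (A + B).trace - 2 * (geom A B).trace = (Mᴴ * M).trace := by
    rw [hgeom, hKey, Matrix.trace_sub, Matrix.trace_sub, Matrix.trace_add]
    ring
  obtain ⟨hpos, hiff⟩ := trace_aux M
  refine ⟨htr ▸ hpos, ?_⟩
  rw [htr, hiff]
  constructor
  · intro hM0
    have h1T : (1 : Matrix (Fin N) (Fin N) ℂ) - T = 0 := by
      have : (1 - T) = ((1 - T) * S) * S⁻¹ := by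
        rw [Matrix.mul_assoc, hSinv, Matrix.mul_one]
      rw [this, ← hMdef, hM0, Matrix.zero_mul]
    have hT1 : T = 1 := by
      have := sub_eq_zero.mp h1T
      exact this.symm
    rw [hT1, Matrix.one_mul, Matrix.mul_one, hSS] at hB'
    exact hB'
  · intro hAB
    have hC1 : C = 1 := by
      rw [hCdef, ← hAB, ← hSS]
      simp only [← Matrix.mul_assoc]
      rw [hSinv', Matrix.one_mul, hSinv]
    have hT1 : (1 : Matrix (Fin N) (Fin N) ℂ) = T := by
      refine eq_msqrt_of_sq_eq ?_ hC ?_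
      · exact Matrix.PosDef.one.posSemidef
      · rw [one_pow, hC1]
    rw [hMdef, ← hT1, sub_self, Matrix.zero_mul]
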